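/- The number of pairs (A,B) ∈ ℤ² with max{|A|³, B²} ≤ X⁶ and such that for every prime p, p⁴ ∤ A or p⁶ ∤ B, and 4A³ + 27B² ≠ 0, is C₁X⁵ + O(X³) where C₁ = 4/ζ(10). -/

import Mathlib

open Finset ArithmeticFunction

open scoped Classical

noncomputable def Mr : ℝ := ∑' n : ℕ, ((moebius n : ℤ) : ℝ) / (n : ℝ) ^ 10

lemma nat_lcm_pow_dvd {d e n k : ℕ} (hk : k ≠ 0) (hd : d ^ k ∣ n) (he : e ^ k ∣ n) :
    Nat.lcm d e ^ k ∣ n := by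
  rcases eq_or_ne n 0 with rfl | hn
  · exact dvd_zero _
  have hd0 : d ≠ 0 := by
    rintro rfl; rw [zero_pow hk] at hd; exact hn (zero_dvd_iff.mp hd)
  have he0 : e ≠ 0 := by
    rintro rfl; rw [zero_pow hk] at he; exact hn (zero_dvd_iff.mp he)
  have hl0 : Nat.lcm d e ≠ 0 := Nat.lcm_ne_zero hd0 he0
  rw [← Nat.factorization_le_iff_dvd (pow_ne_zero _ hl0) hn]
  intro p
  rw [Nat.factorization_pow, Finsupp.smul_apply, Nat.factorization_lcm hd0 he0,
    Finsupp.sup_apply]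
  have hdp := (Nat.factorization_le_iff_dvd (pow_ne_zero _ hd0) hn).mpr hd p
  have hep := (Nat.factorization_le_iff_dvd (pow_ne_zero _ he0) hn).mpr he p
  rw [Nat.factorization_pow, Finsupp.smul_apply] at hdp hep
  rcases le_total (d.factorization p) (e.factorization p) with h | h
  · rw [sup_eq_right.mpr h]; exact hep
  · rw [sup_eq_left.mpr h]; exact hdp

lemma int_lcm_pow_dvd {d e k : ℕ} {A : ℤ} (hk : k ≠ 0)
    (hd : (d : ℤ) ^ k ∣ A) (he : (e : ℤ) ^ k ∣ A) : ((Nat.lcm d e : ℕ) : ℤ) ^ k ∣ A := by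
  rw [← Nat.cast_pow, ← Int.dvd_natAbs, Int.natCast_dvd_natCast] at hd he ⊢
  exact nat_lcm_pow_dvd hk hd he

lemma sum_divisors_moebius_eq (n : ℕ) :
    (∑ d ∈ n.divisors, moebius d) = if n = 1 then 1 else 0 := by
  calc (∑ d ∈ n.divisors, moebius d) = (moebius * (zeta : ArithmeticFunction ℤ)) n := by
        rw [coe_mul_zeta_apply]
    _ = (1 : ArithmeticFunction ℤ) n := by rw [moebius_mul_coe_zeta]
    _ = if n = 1 then 1 else 0 := ArithmeticFunction.one_apply



noncomputable def Zr : ℝ := ∑' n : ℕ, (1 : ℝ) / (n : ℝ) ^ 10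

lemma summable_Z : Summable (fun n : ℕ => (1 : ℝ) / (n : ℝ) ^ 10) :=
  Real.summable_one_div_nat_pow.mpr (by norm_num)

lemma moeb_abs (n : ℕ) : |((moebius n : ℤ) : ℝ)| ≤ 1 := by
  rw [← Int.cast_abs]
  exact_mod_cast abs_moebius_le_one (n := n)

lemma summable_M : Summable (fun n : ℕ => ((moebius n : ℤ) : ℝ) / (n : ℝ) ^ 10) := by
  refine Summable.of_abs (summable_Z.of_nonneg_of_le (fun n => abs_nonneg _) fun n => ?_)
  rw [abs_div, abs_pow, Nat.abs_cast]
  rcases Nat.eq_zero_or_pos n with rfl | hp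
  · simp
  · have h1 : (0:ℝ) < (n:ℝ)^10 := by positivity
    rw [div_le_div_iff_of_pos_right h1]
    exact moeb_abs n

lemma Z_eq_pnat : (∑' n : ℕ+, (1 : ℝ) / ((n : ℕ) : ℝ) ^ 10) = Zr := by
  rw [Zr]
  refine Function.Injective.tsum_eq (f := fun n : ℕ => (1:ℝ)/(n:ℝ)^10)
    (fun a b h => PNat.coe_injective h) fun n hn => ?_
  rcases Nat.eq_zero_or_pos n with rfl | hp
  · exfalso; apply Function.mem_support.mp hn; simp
  · exact ⟨⟨n, hp⟩, rfl⟩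

lemma LZ_eq : LSeries (fun n => ((ArithmeticFunction.zeta n : ℕ) : ℂ)) 10 = (Zr : ℂ) := by
  rw [Zr, Complex.ofReal_tsum]
  refine tsum_congr fun n => ?_
  rcases eq_or_ne n 0 with rfl | hn
  · simp [LSeries.term_zero]
  · rw [LSeries.term_of_ne_zero hn]
    have h10 : (n : ℂ) ^ (10 : ℂ) = ((n : ℂ) ^ (10 : ℕ)) := by
      rw [← Complex.cpow_natCast]; norm_num
    rw [h10, zeta_apply, if_neg hn]
    push_cast
    ring

lemma LM_eq : LSeries (fun n => ((moebius n : ℤ) : ℂ)) 10 = (Mr : ℂ) := by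
  rw [Mr, Complex.ofReal_tsum]
  refine tsum_congr fun n => ?_
  rcases eq_or_ne n 0 with rfl | hn
  · simp [LSeries.term_zero]
  · rw [LSeries.term_of_ne_zero hn]
    have h10 : (n : ℂ) ^ (10 : ℂ) = ((n : ℂ) ^ (10 : ℕ)) := by
      rw [← Complex.cpow_natCast]; norm_num
    rw [h10]
    push_cast
    ring

lemma ZM_one : Zr * Mr = 1 := by
  have := ArithmeticFunction.LSeries_zeta_mul_Lseries_moebius (s := 10) (by norm_num)
  rw [LZ_eq, LM_eq, ← Complex.ofReal_mul, ← Complex.ofReal_one] at this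
  exact_mod_cast this


lemma key_ineq {m : ℕ} (hm : 1 ≤ m) {k : ℕ} (hk : 2 ≤ k) :
    (1 : ℝ) / ((m : ℝ) + 1) ^ k ≤ 1 / (m : ℝ) - 1 / ((m : ℝ) + 1) := by
  have hm' : (1 : ℝ) ≤ (m : ℝ) := by exact_mod_cast hm
  have h1 : (0 : ℝ) < (m : ℝ) := by linarith
  have h2 : (0 : ℝ) < (m : ℝ) + 1 := by linarith
  have hstep : (1 : ℝ) / (m : ℝ) - 1 / ((m : ℝ) + 1) = 1 / ((m : ℝ) * ((m : ℝ) + 1)) := by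
    field_simp
    ring
  rw [hstep]
  apply one_div_le_one_div_of_le (by positivity)
  calc (m : ℝ) * ((m : ℝ) + 1) ≤ ((m : ℝ) + 1) ^ 2 := by nlinarith
    _ ≤ ((m : ℝ) + 1) ^ k := pow_le_pow_right₀ (by linarith) hk

lemma sum_inv_pow_le {k : ℕ} (hk : 2 ≤ k) (n : ℕ) :
    ∑ d ∈ Finset.Icc 1 n, (1 : ℝ) / (d : ℝ) ^ k ≤ 2 := by
  rcases Nat.lt_or_ge n 1 with hn | hn
  · interval_cases n
    simp
  · have H : ∀ m : ℕ, 1 ≤ m → ∑ d ∈ Finset.Icc 1 m, (1 : ℝ) / (d : ℝ) ^ k ≤ 2 - 1 / (m : ℝ) := by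
      intro m hm
      induction m, hm using Nat.le_induction with
      | base => simp; norm_num
      | succ m hm ih =>
        rw [Finset.sum_Icc_succ_top (by omega)]
        have := key_ineq hm hk
        push_cast
        push_cast at ih this
        linarith
    have := H n hn
    have hn' : (0:ℝ) < n := by exact_mod_cast hn
    have : (0:ℝ) < 1/(n:ℝ) := by positivity
    linarith [H n hn]

lemma tail_sum_bound {D : ℕ} (hD : 1 ≤ D) :
    ∑' i : ℕ, |((moebius (i + (D + 1)) : ℤ) : ℝ) / ((i + (D + 1) : ℕ) : ℝ) ^ 10| ≤ 1 / (D : ℝ) := by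
  have hsumm : Summable (fun i : ℕ => |((moebius (i + (D + 1)) : ℤ) : ℝ) / ((i + (D + 1) : ℕ) : ℝ) ^ 10|) :=
    ((summable_nat_add_iff (D + 1)).mpr summable_M).abs
  apply hsumm.tsum_le_of_sum_range_le
  intro n
  have hterm : ∀ i : ℕ, |((moebius (i + (D + 1)) : ℤ) : ℝ) / ((i + (D + 1) : ℕ) : ℝ) ^ 10| ≤
      (1 : ℝ) / ((i + D : ℕ) : ℝ) - 1 / ((i + D : ℕ) + 1 : ℝ) := by
    intro i
    have hm : 1 ≤ i + D := by omega
    have hk := key_ineq (m := i + D) hm (k := 10) (by norm_num)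
    have habs : |((moebius (i + (D + 1)) : ℤ) : ℝ) / ((i + (D + 1) : ℕ) : ℝ) ^ 10| ≤
        1 / ((i + (D + 1) : ℕ) : ℝ) ^ 10 := by
      rw [abs_div, abs_pow, Nat.abs_cast]
      have hpos : (0:ℝ) < ((i + (D + 1) : ℕ) : ℝ) ^ 10 := by positivity
      rw [div_le_div_iff_of_pos_right hpos]
      exact moeb_abs _
    refine habs.trans ?_
    have hcast : ((i + (D + 1) : ℕ) : ℝ) = ((i + D : ℕ) : ℝ) + 1 := by push_cast; ring
    rw [hcast]
    exact hk
  calc ∑ i ∈ Finset.range n, |((moebius (i + (D + 1)) : ℤ) : ℝ) / ((i + (D + 1) : ℕ) : ℝ) ^ 10|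
      ≤ ∑ i ∈ Finset.range n, ((1 : ℝ) / ((i + D : ℕ) : ℝ) - 1 / (((i + 1) + D : ℕ) : ℝ)) := by
        apply Finset.sum_le_sum
        intro i _
        have := hterm i
        have hc : (((i + 1) + D : ℕ) : ℝ) = ((i + D : ℕ) : ℝ) + 1 := by push_cast; ring
        rw [hc]
        exact this
    _ = (1 : ℝ) / ((0 + D : ℕ) : ℝ) - 1 / ((n + D : ℕ) : ℝ) :=
        Finset.sum_range_sub' (fun i => (1 : ℝ) / ((i + D : ℕ) : ℝ)) n
    _ ≤ 1 / (D : ℝ) := by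
        have h1 : (0:ℝ) ≤ 1 / ((n + D : ℕ) : ℝ) := by positivity
        simp only [Nat.zero_add]
        linarith

lemma partial_close {D : ℕ} (hD : 1 ≤ D) :
    |Mr - ∑ d ∈ Finset.Icc 1 D, ((moebius d : ℤ) : ℝ) / (d : ℝ) ^ 10| ≤ 1 / (D : ℝ) := by
  have hsplit := Summable.sum_add_tsum_nat_add (f := fun n : ℕ => ((moebius n : ℤ) : ℝ) / (n : ℝ) ^ 10)
    (D + 1) summable_M
  have hrange : ∑ i ∈ Finset.range (D + 1), ((moebius i : ℤ) : ℝ) / (i : ℝ) ^ 10 =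
      ∑ d ∈ Finset.Icc 1 D, ((moebius d : ℤ) : ℝ) / (d : ℝ) ^ 10 := by
    have : Finset.range (D + 1) = insert 0 (Finset.Icc 1 D) := by
      ext x; simp [Finset.mem_range, Finset.mem_insert, Finset.mem_Icc]; omega
    rw [this, Finset.sum_insert (by simp)]
    simp
  rw [hrange] at hsplit
  have : Mr - ∑ d ∈ Finset.Icc 1 D, ((moebius d : ℤ) : ℝ) / (d : ℝ) ^ 10 =
      ∑' i : ℕ, ((moebius (i + (D + 1)) : ℤ) : ℝ) / ((i + (D + 1) : ℕ) : ℝ) ^ 10 := by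
    rw [Mr] at *
    push_cast at hsplit ⊢
    linarith [hsplit]
  rw [this, ← Real.norm_eq_abs]
  refine (norm_tsum_le_tsum_norm ((summable_nat_add_iff (D + 1)).mpr summable_M).norm).trans ?_
  exact le_of_eq_of_le (tsum_congr fun i => Real.norm_eq_abs _) (tail_sum_bound hD)


open scoped Classical in
lemma moebius_indicator {a b : ℤ} {D : ℕ} (hD : 1 ≤ D) (A B : ℤ)
    (hA : |A| ≤ a) (hB : |B| ≤ b) (hDa : a ≤ (D : ℤ)) (hDb : b ≤ (D : ℤ))
    (h0 : ¬(A = 0 ∧ B = 0)) :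
    (∑ d ∈ Finset.Icc 1 D, moebius d *
      (if (d : ℤ) ^ 4 ∣ A ∧ (d : ℤ) ^ 6 ∣ B then (1 : ℤ) else 0)) =
    if (∀ p : ℕ, p.Prime → ¬ (p : ℤ) ^ 4 ∣ A ∨ ¬ (p : ℤ) ^ 6 ∣ B) then 1 else 0 := by
  -- membership helper
  have hmem : ∀ d : ℕ, d ≠ 0 → (d : ℤ) ^ 4 ∣ A → (d : ℤ) ^ 6 ∣ B → d ∈ Finset.Icc 1 D := by
    intro d hd0 h4 h6
    rw [Finset.mem_Icc]
    refine ⟨Nat.one_le_iff_ne_zero.mpr hd0, ?_⟩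
    have hd1 : (1 : ℤ) ≤ (d : ℤ) := by exact_mod_cast Nat.one_le_iff_ne_zero.mpr hd0
    rcases eq_or_ne A 0 with rfl | hA0
    · have hB0 : B ≠ 0 := fun h => h0 ⟨rfl, h⟩
      have h6' : (d : ℤ) ^ 6 ∣ |B| := (dvd_abs _ _).mpr h6
      have := Int.le_of_dvd (abs_pos.mpr hB0) h6'
      have hds : (d : ℤ) ≤ (d : ℤ) ^ 6 := le_self_pow₀ hd1 (by norm_num)
      exact_mod_cast hds.trans (this.trans (hB.trans hDb))
    · have h4' : (d : ℤ) ^ 4 ∣ |A| := (dvd_abs _ _).mpr h4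
      have := Int.le_of_dvd (abs_pos.mpr hA0) h4'
      have hds : (d : ℤ) ≤ (d : ℤ) ^ 4 := le_self_pow₀ hd1 (by norm_num)
      exact_mod_cast hds.trans (this.trans (hA.trans hDa))
  set F : Finset ℕ := (Finset.Icc 1 D).filter
      (fun d => (d : ℤ) ^ 4 ∣ A ∧ (d : ℤ) ^ 6 ∣ B) with hF
  have hmemF : ∀ d : ℕ, d ∈ F ↔ (d ≠ 0 ∧ (d : ℤ) ^ 4 ∣ A ∧ (d : ℤ) ^ 6 ∣ B) := by
    intro d
    rw [hF, Finset.mem_filter, Finset.mem_Icc]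
    constructor
    · rintro ⟨⟨h1, _⟩, h⟩; exact ⟨Nat.one_le_iff_ne_zero.mp h1, h⟩
    · rintro ⟨h1, h4, h6⟩; exact ⟨Finset.mem_Icc.mp (hmem d h1 h4 h6), h4, h6⟩
  -- lcm closure
  have hlcF : ∀ G : Finset ℕ, G ⊆ F → G.lcm _root_.id ∈ F := by
    intro G
    induction G using Finset.induction_on with
    | empty =>
      intro _
      rw [Finset.lcm_empty, hmemF]
      exact ⟨one_ne_zero, by simp, by simp⟩
    | @insert x G hx ih =>
      intro hsub
      rw [Finset.lcm_insert]
      have hxF : x ∈ F := hsub (Finset.mem_insert_self x G)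
      have hGF : G.lcm _root_.id ∈ F := ih (fun y hy => hsub (Finset.mem_insert_of_mem hy))
      obtain ⟨hx0, hx4, hx6⟩ := (hmemF x).mp hxF
      obtain ⟨hG0, hG4, hG6⟩ := (hmemF _).mp hGF
      have hlcm : lcm (_root_.id x) (G.lcm _root_.id) = Nat.lcm x (G.lcm _root_.id) := rfl
      rw [hlcm, hmemF]
      exact ⟨Nat.lcm_ne_zero hx0 hG0, int_lcm_pow_dvd (by norm_num) hx4 hG4,
        int_lcm_pow_dvd (by norm_num) hx6 hG6⟩
  set m : ℕ := F.lcm _root_.id with hm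
  have hmF : m ∈ F := hlcF F Finset.Subset.rfl
  obtain ⟨hm0, hm4, hm6⟩ := (hmemF m).mp hmF
  have hFdiv : F = m.divisors := by
    ext e
    rw [Nat.mem_divisors]
    constructor
    · intro he
      exact ⟨Finset.dvd_lcm (f := _root_.id) he, hm0⟩
    · rintro ⟨he, _⟩
      have he0 : e ≠ 0 := fun h => hm0 (by simpa [h] using Nat.eq_zero_of_zero_dvd (h ▸ he))
      have he' : (e : ℤ) ∣ (m : ℤ) := Int.natCast_dvd_natCast.mpr he
      exact (hmemF e).mpr ⟨he0,
        dvd_trans (pow_dvd_pow_of_dvd he' 4) hm4,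
        dvd_trans (pow_dvd_pow_of_dvd he' 6) hm6⟩
  have hsum : (∑ d ∈ Finset.Icc 1 D, moebius d *
      (if (d : ℤ) ^ 4 ∣ A ∧ (d : ℤ) ^ 6 ∣ B then (1 : ℤ) else 0)) = ∑ d ∈ F, moebius d := by
    rw [hF, Finset.sum_filter]
    exact Finset.sum_congr rfl fun d _ => by split <;> simp
  rw [hsum, hFdiv, sum_divisors_moebius_eq]
  -- m = 1 ↔ minimality
  refine if_congr ?_ rfl rfl
  constructor
  · intro h1 p hp
    by_contra hcon
    push_neg at hcon
    have hpF : p ∈ F := (hmemF p).mpr ⟨hp.ne_zero, hcon.1, hcon.2⟩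
    have : p ∣ m := Finset.dvd_lcm (f := _root_.id) hpF
    rw [h1, Nat.dvd_one] at this
    exact hp.one_lt.ne' this
  · intro hmin
    by_contra h1
    obtain ⟨p, hp, hpm⟩ := Nat.exists_prime_and_dvd h1
    have hp' : (p : ℤ) ∣ (m : ℤ) := Int.natCast_dvd_natCast.mpr hpm
    rcases hmin p hp with h | h
    · exact h (dvd_trans (pow_dvd_pow_of_dvd hp' 4) hm4)
    · exact h (dvd_trans (pow_dvd_pow_of_dvd hp' 6) hm6)


open scoped Classical

lemma card_dvd_Icc {a c : ℤ} (ha : 0 ≤ a) (hc : 0 < c) :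
    (((Finset.Icc (-a) a).filter (fun A => c ∣ A)).card : ℤ) = 2 * (a / c) + 1 := by
  have hk : 0 ≤ a / c := Int.ediv_nonneg ha hc.le
  have himg : (Finset.Icc (-a) a).filter (fun A => c ∣ A) =
      (Finset.Icc (-(a / c)) (a / c)).image (fun x => c * x) := by
    ext y
    simp only [Finset.mem_filter, Finset.mem_Icc, Finset.mem_image]
    constructor
    · rintro ⟨⟨h1, h2⟩, x, rfl⟩
      refine ⟨x, ?_, rfl⟩
      have hxa : c * |x| ≤ a := by
        rcases abs_cases x with ⟨h, _⟩ | ⟨h, _⟩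
        · rw [h]; exact h2
        · rw [h]; linarith [h1]
      have : |x| ≤ a / c := (Int.le_ediv_iff_mul_le hc).mpr (by linarith [hxa, mul_comm c |x|])
      exact abs_le.mp this
    · rintro ⟨x, hx, rfl⟩
      have hxk : |x| ≤ a / c := abs_le.mpr hx
      have h1 : c * |x| ≤ a := by
        have := (Int.le_ediv_iff_mul_le hc).mp hxk
        linarith [this, mul_comm c |x|]
      have h2 : |c * x| ≤ a := by
        rw [abs_mul, abs_of_pos hc]; exact h1
      exact ⟨abs_le.mp h2, x, rfl⟩
  rw [himg, Finset.card_image_of_injective _ (mul_right_injective₀ hc.ne')]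
  rw [Int.card_Icc]
  have : (a / c + 1 - -(a / c)) = 2 * (a / c) + 1 := by ring
  rw [this, Int.toNat_of_nonneg (by linarith)]

lemma sieve_identity {a b : ℤ} (ha : 1 ≤ a) (hb : 1 ≤ b) {D : ℕ}
    (hDa : a ≤ (D : ℤ)) (hDb : b ≤ (D : ℤ)) :
    ((((Finset.Icc (-a) a ×ˢ Finset.Icc (-b) b)).filter
        (fun AB => ∀ p : ℕ, p.Prime → ¬ (p : ℤ) ^ 4 ∣ AB.1 ∨ ¬ (p : ℤ) ^ 6 ∣ AB.2)).card : ℤ) =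
    ∑ d ∈ Finset.Icc 1 D, moebius d *
      ((((Finset.Icc (-a) a ×ˢ Finset.Icc (-b) b).erase (0, 0)).filter
        (fun AB => (d : ℤ) ^ 4 ∣ AB.1 ∧ (d : ℤ) ^ 6 ∣ AB.2)).card : ℤ) := by
  have hD' : 1 ≤ D := by exact_mod_cast ha.trans hDa
  set Box := Finset.Icc (-a) a ×ˢ Finset.Icc (-b) b with hBox
  set P : ℤ × ℤ → Prop := fun AB => ∀ p : ℕ, p.Prime → ¬ (p : ℤ) ^ 4 ∣ AB.1 ∨ ¬ (p : ℤ) ^ 6 ∣ AB.2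
    with hP
  have hstep : ∀ d : ℕ, (((Box.erase (0, 0)).filter
      (fun AB => (d : ℤ) ^ 4 ∣ AB.1 ∧ (d : ℤ) ^ 6 ∣ AB.2)).card : ℤ) =
      ∑ AB ∈ Box.erase (0, 0), (if (d : ℤ) ^ 4 ∣ AB.1 ∧ (d : ℤ) ^ 6 ∣ AB.2 then (1 : ℤ) else 0) := by
    intro d
    rw [Finset.card_filter]
    push_cast
    rfl
  rw [Finset.sum_congr rfl (fun d _ => by rw [hstep d, Finset.mul_sum]), Finset.sum_comm]
  have hinner : ∀ AB ∈ Box.erase (0, 0),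
      (∑ d ∈ Finset.Icc 1 D, moebius d *
        (if (d : ℤ) ^ 4 ∣ AB.1 ∧ (d : ℤ) ^ 6 ∣ AB.2 then (1 : ℤ) else 0)) =
      if P AB then 1 else 0 := by
    intro AB hAB
    rw [Finset.mem_erase] at hAB
    obtain ⟨hne, hmem⟩ := hAB
    rw [hBox, Finset.mem_product, Finset.mem_Icc, Finset.mem_Icc] at hmem
    refine moebius_indicator hD' AB.1 AB.2 (abs_le.mpr hmem.1) (abs_le.mpr hmem.2) hDa hDb ?_
    rintro ⟨h1, h2⟩
    exact hne (Prod.ext h1 h2)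
  rw [Finset.sum_congr rfl hinner]
  have hP0 : ¬ P (0, 0) := by
    intro h
    rcases h 2 Nat.prime_two with h' | h' <;> exact h' (dvd_zero _)
  have : (Box.erase (0, 0)).filter P = Box.filter P := by
    rw [Finset.filter_erase, Finset.erase_eq_of_notMem]
    intro hmem
    exact hP0 (Finset.mem_filter.mp hmem).2
  rw [← this, Finset.card_filter]
  push_cast
  rfl

open scoped Classical

lemma box_dvd_card {a b : ℤ} (ha : 0 ≤ a) (hb : 0 ≤ b) {c c' : ℤ} (hc : 0 < c) (hc' : 0 < c') :
    ((((Finset.Icc (-a) a ×ˢ Finset.Icc (-b) b).erase (0, 0)).filter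
      (fun AB : ℤ × ℤ => c ∣ AB.1 ∧ c' ∣ AB.2)).card : ℤ) =
    (2 * (a / c) + 1) * (2 * (b / c') + 1) - 1 := by
  have hfp : ((Finset.Icc (-a) a ×ˢ Finset.Icc (-b) b)).filter
      (fun AB : ℤ × ℤ => c ∣ AB.1 ∧ c' ∣ AB.2) =
      (Finset.Icc (-a) a).filter (fun A => c ∣ A) ×ˢ (Finset.Icc (-b) b).filter (fun B => c' ∣ B) :=
    Finset.filter_product _ _
  have herase : (((Finset.Icc (-a) a ×ˢ Finset.Icc (-b) b)).erase (0, 0)).filter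
      (fun AB : ℤ × ℤ => c ∣ AB.1 ∧ c' ∣ AB.2) =
      ((((Finset.Icc (-a) a ×ˢ Finset.Icc (-b) b)).filter
        (fun AB : ℤ × ℤ => c ∣ AB.1 ∧ c' ∣ AB.2)).erase (0, 0)) := Finset.filter_erase _ _ _
  have hmem : (0, 0) ∈ ((Finset.Icc (-a) a ×ˢ Finset.Icc (-b) b)).filter
      (fun AB : ℤ × ℤ => c ∣ AB.1 ∧ c' ∣ AB.2) := by
    refine Finset.mem_filter.mpr ⟨Finset.mem_product.mpr ⟨?_, ?_⟩, dvd_zero _, dvd_zero _⟩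
    · show (0 : ℤ) ∈ Finset.Icc (-a) a
      rw [Finset.mem_Icc]; omega
    · show (0 : ℤ) ∈ Finset.Icc (-b) b
      rw [Finset.mem_Icc]; omega
  rw [herase, Finset.card_erase_of_mem hmem, hfp, Finset.card_product]
  have h1 : 1 ≤ ((Finset.Icc (-a) a).filter (fun A => c ∣ A)).card *
      ((Finset.Icc (-b) b).filter (fun B => c' ∣ B)).card := by
    rw [hfp, Finset.mem_product] at hmem
    exact Nat.one_le_iff_ne_zero.mpr (Nat.mul_ne_zero
      (Finset.card_ne_zero_of_mem hmem.1) (Finset.card_ne_zero_of_mem hmem.2))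
  push_cast [Nat.cast_sub h1]
  rw [card_dvd_Icc ha hc, card_dvd_Icc hb hc']

lemma singular_card_le {a b : ℤ} (ha : 0 ≤ a) {P : ℤ × ℤ → Prop} :
    (((Finset.Icc (-a) a ×ˢ Finset.Icc (-b) b)).filter
      (fun AB : ℤ × ℤ => P AB ∧ 4 * AB.1 ^ 3 + 27 * AB.2 ^ 2 = 0)).card ≤
    2 * (a + 1).toNat * 2 := by
  have : (((Finset.Icc (-a) a ×ˢ Finset.Icc (-b) b)).filter
      (fun AB : ℤ × ℤ => P AB ∧ 4 * AB.1 ^ 3 + 27 * AB.2 ^ 2 = 0)).card ≤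
      (Finset.Icc (-a) a ×ˢ (Finset.univ : Finset Bool)).card := by
    apply Finset.card_le_card_of_injOn (fun AB => (AB.1, decide (0 ≤ AB.2)))
    · intro AB hAB
      rw [Finset.mem_coe, Finset.mem_filter, Finset.mem_product] at hAB
      rw [Finset.mem_coe, Finset.mem_product]
      exact ⟨hAB.1.1, Finset.mem_univ _⟩
    · intro AB hAB CD hCD heq
      simp only [Finset.coe_filter, Set.mem_setOf_eq] at hAB hCD
      obtain ⟨-, -, h1⟩ := hAB
      obtain ⟨-, -, h2⟩ := hCD
      have heq' : (AB.1, decide (0 ≤ AB.2)) = (CD.1, decide (0 ≤ CD.2)) := heq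
      rw [Prod.mk.injEq] at heq'
      obtain ⟨hA, hb'⟩ := heq'
      have hsq : AB.2 ^ 2 = CD.2 ^ 2 := by
        rw [hA] at h1; linarith
      have habs : AB.2 = CD.2 ∨ AB.2 = -CD.2 :=
        abs_eq_abs.mp ((sq_eq_sq_iff_abs_eq_abs _ _).mp hsq)
      have hiff : (0 ≤ AB.2) ↔ (0 ≤ CD.2) := decide_eq_decide.mp hb'
      have hB : AB.2 = CD.2 := by omega
      exact Prod.ext hA hB
  calc _ ≤ _ := this
    _ ≤ 2 * (a + 1).toNat * 2 := by
        rw [Finset.card_product, Int.card_Icc, Finset.card_univ, Fintype.card_bool]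
        omega

lemma Tbound {U V x y : ℝ} (hu0 : 0 ≤ U) (hv0 : 0 ≤ V) (hux : U ≤ x) (hxu : x ≤ U + 1)
    (hvy : V ≤ y) (hyv : y ≤ V + 1) :
    |(2 * U + 1) * (2 * V + 1) - 1 - 4 * (x * y)| ≤ 6 * x + 6 * y := by
  have hx0 : (0:ℝ) ≤ x := le_trans hu0 hux
  have hy0 : (0:ℝ) ≤ y := le_trans hv0 hvy
  have hUVxy : U * V ≤ x * y := mul_le_mul hux hvy hv0 hx0
  have hA1 : x * (y - V) ≤ x := mul_le_of_le_one_right hx0 (by linarith)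
  have hA2 : V * (x - U) ≤ y := (mul_le_of_le_one_right hv0 (by linarith)).trans hvy
  rw [abs_le]
  constructor
  · nlinarith [hA1, hA2]
  · nlinarith [hUVxy]

lemma ab_est {ar br X : ℝ} (hX : 1 ≤ X) (ha : ar ≤ X ^ 2) (hb : br ≤ X ^ 3)
    (ha' : X ^ 2 - 1 < ar) (hb' : X ^ 3 - 1 < br) : |ar * br - X ^ 5| ≤ 2 * X ^ 3 := by
  have hX2 : (1:ℝ) ≤ X ^ 2 := one_le_pow₀ hX
  have hX3 : (1:ℝ) ≤ X ^ 3 := one_le_pow₀ hX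
  have hX23 : X ^ 2 ≤ X ^ 3 := pow_le_pow_right₀ hX (by norm_num)
  have hprod : (0:ℝ) ≤ (ar - (X ^ 2 - 1)) * (br - (X ^ 3 - 1)) :=
    mul_nonneg (by linarith) (by linarith)
  have h5 : X ^ 2 * X ^ 3 = X ^ 5 := by ring
  have hab5 : ar * br ≤ X ^ 5 := by nlinarith [mul_le_mul ha hb (by linarith) (by linarith)]
  have hab5' : X ^ 5 - ar * br ≤ 2 * X ^ 3 := by nlinarith [hprod]
  rw [abs_le]
  constructor <;> nlinarith [hab5, hab5', hX3]

/-- The number of pairs `(A, B) ∈ ℤ²` with `max{|A|³, B²} ≤ X⁶`, such that for every prime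
`p` either `p⁴ ∤ A` or `p⁶ ∤ B`, and `4A³ + 27B² ≠ 0`, is `C₁X⁵ + O(X³)`, where
`C₁ = 4/ζ(10)` and `ζ(10) = ∑_{n ≥ 1} n⁻¹⁰` is the Riemann zeta value. -/
theorem count_elliptic_curves_asymptotic :
    ∃ C : ℝ, 0 < C ∧ ∀ X : ℝ, 1 ≤ X →
      |(Nat.card {AB : ℤ × ℤ //
          ((max (|AB.1| ^ 3) (AB.2 ^ 2) : ℤ) : ℝ) ≤ X ^ 6 ∧
          (∀ p : ℕ, p.Prime → ¬ (p : ℤ) ^ 4 ∣ AB.1 ∨ ¬ (p : ℤ) ^ 6 ∣ AB.2) ∧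
          4 * AB.1 ^ 3 + 27 * AB.2 ^ 2 ≠ 0} : ℝ) -
        (4 / ∑' n : ℕ+, (1 : ℝ) / (n : ℝ) ^ 10) * X ^ 5| ≤ C * X ^ 3 := by
  refine ⟨100, by norm_num, fun X hX => ?_⟩
  have hX0 : (0:ℝ) < X := by linarith
  have hX2 : (1:ℝ) ≤ X ^ 2 := one_le_pow₀ hX
  have hX3 : (1:ℝ) ≤ X ^ 3 := one_le_pow₀ hX
  have hX23 : X ^ 2 ≤ X ^ 3 := pow_le_pow_right₀ hX (by norm_num)
  set a : ℤ := ⌊X ^ 2⌋ with hadef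
  set b : ℤ := ⌊X ^ 3⌋ with hbdef
  have ha1 : 1 ≤ a := Int.le_floor.mpr (by exact_mod_cast hX2)
  have hb1 : 1 ≤ b := Int.le_floor.mpr (by exact_mod_cast hX3)
  have haX : (a:ℝ) ≤ X ^ 2 := Int.floor_le _
  have hbX : (b:ℝ) ≤ X ^ 3 := Int.floor_le _
  have haX' : X ^ 2 - 1 < (a:ℝ) := Int.sub_one_lt_floor _
  have hbX' : X ^ 3 - 1 < (b:ℝ) := Int.sub_one_lt_floor _
  have haR1 : (1:ℝ) ≤ (a:ℝ) := by exact_mod_cast ha1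
  have hbR1 : (1:ℝ) ≤ (b:ℝ) := by exact_mod_cast hb1
  set D : ℕ := (a + b).toNat with hDdef
  have hDZ : (D:ℤ) = a + b := Int.toNat_of_nonneg (by linarith)
  have hDa : a ≤ (D:ℤ) := by rw [hDZ]; linarith
  have hDb : b ≤ (D:ℤ) := by rw [hDZ]; linarith
  have hD1 : 1 ≤ D := by
    have h : (1:ℤ) ≤ (D:ℤ) := le_trans ha1 hDa
    exact_mod_cast h
  have hDR : (0:ℝ) < (D:ℝ) := by
    have : (1:ℝ) ≤ (D:ℝ) := by exact_mod_cast hD1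
    linarith
  have hbD : (b:ℝ) ≤ (D:ℝ) := by exact_mod_cast hDb
  set P : ℤ × ℤ → Prop :=
    fun AB => ∀ p : ℕ, p.Prime → ¬ (p : ℤ) ^ 4 ∣ AB.1 ∨ ¬ (p : ℤ) ^ 6 ∣ AB.2 with hP
  set Box : Finset (ℤ × ℤ) := Finset.Icc (-a) a ×ˢ Finset.Icc (-b) b with hBox
  set Fns : Finset (ℤ × ℤ) :=
    Box.filter (fun AB => P AB ∧ 4 * AB.1 ^ 3 + 27 * AB.2 ^ 2 ≠ 0) with hFns
  -- reduce Nat.card to Finset card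
  have hcond : ∀ AB : ℤ × ℤ,
      (((max (|AB.1| ^ 3) (AB.2 ^ 2) : ℤ) : ℝ) ≤ X ^ 6 ∧
        (∀ p : ℕ, p.Prime → ¬ (p : ℤ) ^ 4 ∣ AB.1 ∨ ¬ (p : ℤ) ^ 6 ∣ AB.2) ∧
        4 * AB.1 ^ 3 + 27 * AB.2 ^ 2 ≠ 0)
      ↔ AB ∈ Fns := by
    intro AB
    rw [hFns, Finset.mem_filter, hBox, Finset.mem_product, Finset.mem_Icc, Finset.mem_Icc]
    have e1 : ((|AB.1| ^ 3 : ℤ) : ℝ) ≤ X ^ 6 ↔ (-a ≤ AB.1 ∧ AB.1 ≤ a) := by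
      rw [← abs_le, hadef, Int.le_floor]
      push_cast
      rw [show (X:ℝ) ^ 6 = (X ^ 2) ^ 3 by ring]
      exact pow_le_pow_iff_left₀ (abs_nonneg _) (by positivity) (by norm_num)
    have e2 : ((AB.2 ^ 2 : ℤ) : ℝ) ≤ X ^ 6 ↔ (-b ≤ AB.2 ∧ AB.2 ≤ b) := by
      rw [← abs_le, hbdef, Int.le_floor]
      push_cast
      rw [show ((AB.2 : ℝ)) ^ 2 = |(AB.2 : ℝ)| ^ 2 from (sq_abs _).symm,
        show (X:ℝ) ^ 6 = (X ^ 3) ^ 2 by ring]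
      exact pow_le_pow_iff_left₀ (abs_nonneg _) (by positivity) (by norm_num)
    rw [Int.cast_max, max_le_iff, e1, e2]
  have hNat : (Nat.card {AB : ℤ × ℤ //
      ((max (|AB.1| ^ 3) (AB.2 ^ 2) : ℤ) : ℝ) ≤ X ^ 6 ∧
      (∀ p : ℕ, p.Prime → ¬ (p : ℤ) ^ 4 ∣ AB.1 ∨ ¬ (p : ℤ) ^ 6 ∣ AB.2) ∧
      4 * AB.1 ^ 3 + 27 * AB.2 ^ 2 ≠ 0}) = Fns.card := by
    rw [Nat.card_congr (Equiv.subtypeEquivRight hcond)]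
    exact Nat.card_eq_finsetCard _
  -- the sieve
  set u : ℕ → ℤ := fun d => a / (d:ℤ)^4 with hu
  set v : ℕ → ℤ := fun d => b / (d:ℤ)^6 with hv
  have hMinZ : (((Box.filter P).card) : ℤ) =
      ∑ d ∈ Finset.Icc 1 D, moebius d * ((2 * u d + 1) * (2 * v d + 1) - 1) := by
    rw [hBox, hP, sieve_identity ha1 hb1 hDa hDb]
    refine Finset.sum_congr rfl fun d hd => ?_
    have hd1 : 1 ≤ d := (Finset.mem_Icc.mp hd).1
    have hdz : (0:ℤ) < (d:ℤ) := by exact_mod_cast hd1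
    rw [box_dvd_card (by linarith) (by linarith) (by positivity) (by positivity)]
  have hMinR : (((Box.filter P).card) : ℝ) =
      ∑ d ∈ Finset.Icc 1 D, ((moebius d : ℤ) : ℝ) *
        ((2 * ((u d : ℤ) : ℝ) + 1) * (2 * ((v d : ℤ) : ℝ) + 1) - 1) := by
    have h := congrArg (fun z : ℤ => (z : ℝ)) hMinZ
    simp only [Int.cast_natCast] at h
    rw [h]
    push_cast
    exact Finset.sum_congr rfl fun d _ => by ring
  set S : ℝ := ∑ d ∈ Finset.Icc 1 D, ((moebius d : ℤ) : ℝ) / (d : ℝ) ^ 10 with hS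
  -- term-wise bound
  have hterm : ∀ d ∈ Finset.Icc 1 D,
      |((moebius d : ℤ) : ℝ) *
          ((2 * ((u d : ℤ) : ℝ) + 1) * (2 * ((v d : ℤ) : ℝ) + 1) - 1) -
        ((moebius d : ℤ) : ℝ) * (4 * (a:ℝ) * (b:ℝ) / (d:ℝ)^10)| ≤
      6 * ((a:ℝ) / (d:ℝ)^4) + 6 * ((b:ℝ) / (d:ℝ)^6) := by
    intro d hd
    have hd1 : 1 ≤ d := (Finset.mem_Icc.mp hd).1
    have hdr : (1:ℝ) ≤ (d:ℝ) := by exact_mod_cast hd1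
    have hdz : (0:ℤ) < (d:ℤ) := by exact_mod_cast hd1
    have hd4 : (0:ℝ) < (d:ℝ)^4 := by positivity
    have hd6 : (0:ℝ) < (d:ℝ)^6 := by positivity
    have hd4z : (0:ℤ) < (d:ℤ)^4 := by positivity
    have hd6z : (0:ℤ) < (d:ℤ)^6 := by positivity
    have hu0 : (0:ℝ) ≤ ((u d : ℤ) : ℝ) := by
      have : (0:ℤ) ≤ u d := Int.ediv_nonneg (by linarith) hd4z.le
      exact_mod_cast this
    have hv0 : (0:ℝ) ≤ ((v d : ℤ) : ℝ) := by
      have : (0:ℤ) ≤ v d := Int.ediv_nonneg (by linarith) hd6z.le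
      exact_mod_cast this
    have hux : ((u d : ℤ) : ℝ) ≤ (a:ℝ) / (d:ℝ)^4 := by
      rw [le_div_iff₀ hd4]
      have h := Int.ediv_mul_le a hd4z.ne'
      have : ((a / (d:ℤ)^4 * (d:ℤ)^4 : ℤ) : ℝ) ≤ ((a : ℤ) : ℝ) := by exact_mod_cast h
      push_cast at this
      rw [hu]
      push_cast
      linarith
    have hxu : (a:ℝ) / (d:ℝ)^4 ≤ ((u d : ℤ) : ℝ) + 1 := by
      rw [div_le_iff₀ hd4]
      have h := Int.lt_ediv_add_one_mul_self a hd4z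
      have : ((a:ℤ):ℝ) < (((a / (d:ℤ)^4 + 1) * (d:ℤ)^4 : ℤ) : ℝ) := by exact_mod_cast h
      push_cast at this
      rw [hu]
      push_cast
      linarith
    have hvy : ((v d : ℤ) : ℝ) ≤ (b:ℝ) / (d:ℝ)^6 := by
      rw [le_div_iff₀ hd6]
      have h := Int.ediv_mul_le b hd6z.ne'
      have : ((b / (d:ℤ)^6 * (d:ℤ)^6 : ℤ) : ℝ) ≤ ((b : ℤ) : ℝ) := by exact_mod_cast h
      push_cast at this
      rw [hv]
      push_cast
      linarith
    have hyv : (b:ℝ) / (d:ℝ)^6 ≤ ((v d : ℤ) : ℝ) + 1 := by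
      rw [div_le_iff₀ hd6]
      have h := Int.lt_ediv_add_one_mul_self b hd6z
      have : ((b:ℤ):ℝ) < (((b / (d:ℤ)^6 + 1) * (d:ℤ)^6 : ℤ) : ℝ) := by exact_mod_cast h
      push_cast at this
      rw [hv]
      push_cast
      linarith
    set x : ℝ := (a:ℝ) / (d:ℝ)^4 with hx
    set y : ℝ := (b:ℝ) / (d:ℝ)^6 with hy
    have hxy : 4 * (a:ℝ) * (b:ℝ) / (d:ℝ)^10 = 4 * (x * y) := by
      rw [hx, hy]
      field_simp
    rw [← mul_sub, abs_mul, hxy]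
    have h2 : |(2 * ((u d : ℤ) : ℝ) + 1) * (2 * ((v d : ℤ) : ℝ) + 1) - 1 - 4 * (x * y)| ≤
        6 * x + 6 * y := Tbound hu0 hv0 hux hxu hvy hyv
    calc |((moebius d : ℤ) : ℝ)| *
        |(2 * ((u d : ℤ) : ℝ) + 1) * (2 * ((v d : ℤ) : ℝ) + 1) - 1 - 4 * (x * y)| ≤
        1 * (6 * x + 6 * y) := by
          apply mul_le_mul (moeb_abs d) h2 (abs_nonneg _) zero_le_one
      _ = 6 * x + 6 * y := one_mul _
  -- step 1
  have hstep1 : |(((Box.filter P).card) : ℝ) - 4 * (a:ℝ) * (b:ℝ) * S| ≤ 24 * X ^ 3 := by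
    have hfac : ∑ d ∈ Finset.Icc 1 D, ((moebius d : ℤ) : ℝ) * (4 * (a:ℝ) * (b:ℝ) / (d:ℝ)^10) =
        4 * (a:ℝ) * (b:ℝ) * S := by
      rw [hS, Finset.mul_sum]
      exact Finset.sum_congr rfl fun d _ => by ring
    rw [hMinR, ← hfac, ← Finset.sum_sub_distrib]
    refine (Finset.abs_sum_le_sum_abs _ _).trans ?_
    refine (Finset.sum_le_sum hterm).trans ?_
    rw [Finset.sum_add_distrib]
    have hA : ∑ d ∈ Finset.Icc 1 D, 6 * ((a:ℝ) / (d:ℝ)^4) ≤ 12 * (a:ℝ) := by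
      have hrw : ∑ d ∈ Finset.Icc 1 D, 6 * ((a:ℝ) / (d:ℝ)^4) =
          6 * (a:ℝ) * ∑ d ∈ Finset.Icc 1 D, 1 / (d:ℝ)^4 := by
        rw [Finset.mul_sum]
        exact Finset.sum_congr rfl fun d _ => by ring
      rw [hrw]
      have h2 := sum_inv_pow_le (k := 4) (by norm_num) D
      have h3 := mul_le_mul_of_nonneg_left h2 (by linarith only [haR1] : (0:ℝ) ≤ 6 * (a:ℝ))
      linarith only [h3]
    have hB : ∑ d ∈ Finset.Icc 1 D, 6 * ((b:ℝ) / (d:ℝ)^6) ≤ 12 * (b:ℝ) := by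
      have hrw : ∑ d ∈ Finset.Icc 1 D, 6 * ((b:ℝ) / (d:ℝ)^6) =
          6 * (b:ℝ) * ∑ d ∈ Finset.Icc 1 D, 1 / (d:ℝ)^6 := by
        rw [Finset.mul_sum]
        exact Finset.sum_congr rfl fun d _ => by ring
      rw [hrw]
      have h2 := sum_inv_pow_le (k := 6) (by norm_num) D
      have h3 := mul_le_mul_of_nonneg_left h2 (by linarith only [hbR1] : (0:ℝ) ≤ 6 * (b:ℝ))
      linarith only [h3]
    have h4 : 12 * (a:ℝ) + 12 * (b:ℝ) ≤ 24 * X ^ 3 := by linarith only [haX, hbX, hX23]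
    linarith only [hA, hB, h4]
  -- step 2
  have hclose := partial_close hD1
  have hstep2 : |4 * (a:ℝ) * (b:ℝ) * S - 4 * (a:ℝ) * (b:ℝ) * Mr| ≤ 4 * X ^ 3 := by
    rw [← mul_sub, abs_mul]
    have habpos : (0:ℝ) < (a:ℝ) * (b:ℝ) :=
      mul_pos (by linarith only [haR1]) (by linarith only [hbR1])
    have habs4 : |4 * (a:ℝ) * (b:ℝ)| = 4 * (a:ℝ) * (b:ℝ) := abs_of_pos (by linarith only [habpos])
    rw [habs4]
    have h1 : |S - Mr| ≤ 1 / (D:ℝ) := by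
      rw [← abs_neg]
      simp only [neg_sub]
      exact hclose
    calc 4 * (a:ℝ) * (b:ℝ) * |S - Mr| ≤ 4 * (a:ℝ) * (b:ℝ) * (1 / (D:ℝ)) := by
          apply mul_le_mul_of_nonneg_left h1 (by linarith only [habpos])
      _ = 4 * (a:ℝ) * ((b:ℝ) / (D:ℝ)) := by ring
      _ ≤ 4 * (a:ℝ) * 1 := by
          apply mul_le_mul_of_nonneg_left ((div_le_one hDR).mpr hbD) (by linarith only [haR1])
      _ ≤ 4 * X ^ 3 := by linarith only [haX, hX23]
  -- Mr facts
  have hZr1 : (1:ℝ) ≤ Zr := by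
    unfold Zr
    have h := summable_Z.le_tsum 1 (fun j _ => by positivity)
    norm_num at h
    simpa using h
  have hZr0 : (0:ℝ) < Zr := by linarith
  have hMrZ : Mr = 1 / Zr := eq_one_div_of_mul_eq_one_left (by rw [mul_comm]; exact ZM_one)
  have hMr0 : 0 < Mr := by rw [hMrZ]; positivity
  have hMr1 : Mr ≤ 1 := by
    rw [hMrZ]
    rw [div_le_one hZr0]
    linarith
  -- step 3
  have hstep3 : |4 * (a:ℝ) * (b:ℝ) * Mr - 4 * Mr * X ^ 5| ≤ 8 * X ^ 3 := by
    have habs : |(a:ℝ) * (b:ℝ) - X ^ 5| ≤ 2 * X ^ 3 :=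
      ab_est hX haX hbX haX' hbX'
    have hrw : 4 * (a:ℝ) * (b:ℝ) * Mr - 4 * Mr * X ^ 5 = 4 * Mr * ((a:ℝ) * (b:ℝ) - X ^ 5) := by
      ring
    rw [hrw, abs_mul, abs_of_pos (by linarith : (0:ℝ) < 4 * Mr)]
    calc 4 * Mr * |(a:ℝ) * (b:ℝ) - X ^ 5| ≤ 4 * 1 * (2 * X ^ 3) := by
          apply mul_le_mul (by linarith) habs (abs_nonneg _) (by norm_num)
      _ = 8 * X ^ 3 := by ring
  -- the singular count
  set Sg : Finset (ℤ × ℤ) :=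
    Box.filter (fun AB => P AB ∧ 4 * AB.1 ^ 3 + 27 * AB.2 ^ 2 = 0) with hSg
  have hsplitc : (Box.filter P).card = Fns.card + Sg.card := by
    have h := Finset.card_filter_add_card_filter_not
      (s := Box.filter P) (p := fun AB : ℤ × ℤ => 4 * AB.1 ^ 3 + 27 * AB.2 ^ 2 ≠ 0)
    rw [Finset.filter_filter, Finset.filter_filter] at h
    have hcong : Box.filter (fun AB : ℤ × ℤ => P AB ∧ ¬ (4 * AB.1 ^ 3 + 27 * AB.2 ^ 2 ≠ 0)) = Sg := by
      rw [hSg]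
      refine Finset.filter_congr fun AB _ => ?_
      rw [not_not]
    rw [hcong] at h
    rw [hFns]
    exact h.symm
  have hSgle : (Sg.card : ℝ) ≤ 8 * X ^ 3 := by
    have h := singular_card_le (a := a) (b := b) (by linarith) (P := P)
    rw [← hBox, ← hSg] at h
    have hcast : ((2 * (a+1).toNat * 2 : ℕ) : ℝ) = 4 * ((a:ℝ) + 1) := by
      have h1' : ((a+1).toNat : ℤ) = a + 1 := Int.toNat_of_nonneg (by linarith)
      have h2 : (((a+1).toNat : ℕ) : ℝ) = (a:ℝ) + 1 := by exact_mod_cast h1'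
      push_cast
      rw [h2]
      ring
    calc (Sg.card : ℝ) ≤ ((2 * (a+1).toNat * 2 : ℕ) : ℝ) := by exact_mod_cast h
      _ = 4 * ((a:ℝ) + 1) := hcast
      _ ≤ 8 * X ^ 3 := by linarith only [haX, hX23, hX3]
  -- constant identification
  have hZp : (∑' n : ℕ+, (1 : ℝ) / (n : ℝ) ^ 10) = Zr := Z_eq_pnat
  have hconst : (4 / ∑' n : ℕ+, (1 : ℝ) / (n : ℝ) ^ 10) = 4 * Mr := by
    rw [hZp, hMrZ]
    ring
  -- final assembly
  rw [hNat, hconst]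
  have hFM : (Fns.card : ℝ) = ((Box.filter P).card : ℝ) - (Sg.card : ℝ) := by
    rw [hsplitc]
    push_cast
    ring
  calc |(Fns.card : ℝ) - 4 * Mr * X ^ 5|
      = |((Fns.card : ℝ) - ((Box.filter P).card : ℝ)) +
          ((((Box.filter P).card : ℝ) - 4 * (a:ℝ) * (b:ℝ) * S) +
          ((4 * (a:ℝ) * (b:ℝ) * S - 4 * (a:ℝ) * (b:ℝ) * Mr) +
          (4 * (a:ℝ) * (b:ℝ) * Mr - 4 * Mr * X ^ 5)))| := by ring_nf
    _ ≤ |(Fns.card : ℝ) - ((Box.filter P).card : ℝ)| +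
          (|((Box.filter P).card : ℝ) - 4 * (a:ℝ) * (b:ℝ) * S| +
          (|4 * (a:ℝ) * (b:ℝ) * S - 4 * (a:ℝ) * (b:ℝ) * Mr| +
          |4 * (a:ℝ) * (b:ℝ) * Mr - 4 * Mr * X ^ 5|)) := by
        refine (abs_add_le _ _).trans ?_
        gcongr
        refine (abs_add_le _ _).trans ?_
        gcongr
        exact abs_add_le _ _
    _ ≤ 8 * X ^ 3 + (24 * X ^ 3 + (4 * X ^ 3 + 8 * X ^ 3)) := by
        have h1 : |(Fns.card : ℝ) - ((Box.filter P).card : ℝ)| ≤ 8 * X ^ 3 := by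
          rw [hFM]
          rw [show (((Box.filter P).card : ℝ) - (Sg.card:ℝ)) - ((Box.filter P).card : ℝ) =
            -(Sg.card : ℝ) by ring, abs_neg, abs_of_nonneg (by positivity)]
          exact hSgle
        gcongr
    _ ≤ 100 * X ^ 3 := by linarith only [hX3]
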